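/- Let Z ~ ESN₂(0, Ω̄, α, τ) in dimension 2, with Ω̄ having off-diagonal entry λ ∈ (−1,1), α = (α₁, α₂), δᵢ as in the context. Then E[Z₁Z₂] = λ + δ₁δ₂·(ζ₂(τ) + ζ₁(τ)²), where ζ₁(x) = φ(x)/Φ(x) and ζ₂(x) = −(xζ₁(x)+ζ₁(x)²). -/

import Mathlib

open MeasureTheory Real

noncomputable def phi (x : ℝ) : ℝ := (Real.sqrt (2 * Real.pi))⁻¹ * Real.exp (-x ^ 2 / 2)

noncomputable def Phi (x : ℝ) : ℝ := ∫ t in Set.Iic x, phi t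

noncomputable def zeta1 (x : ℝ) : ℝ := phi x / Phi x

noncomputable def zeta2 (x : ℝ) : ℝ := -(x * zeta1 x + (zeta1 x) ^ 2)

/-- Density of the bivariate `ESN₂(0, Ω̄, α, τ)` distribution, where `Ω̄ = [[1,λ],[λ,1]]`. -/
noncomputable def esn2Pdf (lam α₁ α₂ τ : ℝ) (z : ℝ × ℝ) : ℝ :=
  (2 * Real.pi * Real.sqrt (1 - lam ^ 2))⁻¹ *
    Real.exp (-(z.1 ^ 2 + z.2 ^ 2 - 2 * lam * z.1 * z.2) / (2 * (1 - lam ^ 2))) *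
    Phi (τ * Real.sqrt (1 + (α₁ ^ 2 + α₂ ^ 2 + 2 * α₁ * α₂ * lam)) + α₁ * z.1 + α₂ * z.2) /
    Phi τ

/-! ### Basic facts about `phi` -/

lemma sqrt_two_pi_pos : 0 < Real.sqrt (2 * Real.pi) :=
  Real.sqrt_pos.2 (by positivity)

lemma phi_pos (x : ℝ) : 0 < phi x := by
  unfold phi; positivity

lemma phi_nonneg (x : ℝ) : 0 ≤ phi x := (phi_pos x).le

lemma phi_le (x : ℝ) : phi x ≤ (Real.sqrt (2 * Real.pi))⁻¹ := by
  unfold phi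
  have h : Real.exp (-x ^ 2 / 2) ≤ 1 := by
    rw [Real.exp_le_one_iff]; nlinarith [sq_nonneg x]
  calc (Real.sqrt (2 * Real.pi))⁻¹ * Real.exp (-x ^ 2 / 2)
      ≤ (Real.sqrt (2 * Real.pi))⁻¹ * 1 := by
        exact mul_le_mul_of_nonneg_left h (by positivity)
    _ = (Real.sqrt (2 * Real.pi))⁻¹ := mul_one _

lemma continuous_phi : Continuous phi := by
  unfold phi; continuity

lemma phi_eq_exp (x : ℝ) : phi x = (Real.sqrt (2 * Real.pi))⁻¹ * Real.exp (-(2⁻¹) * x ^ 2) := by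
  unfold phi; ring_nf

lemma phi_funext : phi = fun x => (Real.sqrt (2 * Real.pi))⁻¹ * Real.exp (-(2⁻¹) * x ^ 2) :=
  funext phi_eq_exp

lemma integrable_phi : Integrable phi := by
  rw [phi_funext]
  exact (integrable_exp_neg_mul_sq (by norm_num : (0:ℝ) < 2⁻¹)).const_mul _

lemma integral_phi : ∫ x, phi x = 1 := by
  rw [phi_funext]
  rw [MeasureTheory.integral_const_mul, integral_gaussian]
  rw [show Real.pi / 2⁻¹ = 2 * Real.pi by ring]
  exact inv_mul_cancel₀ sqrt_two_pi_pos.ne'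

lemma integrable_id_phi : Integrable (fun x => x * phi x) := by
  simp_rw [phi_eq_exp, show ∀ x : ℝ, x * ((Real.sqrt (2 * Real.pi))⁻¹ * Real.exp (-(2⁻¹) * x ^ 2))
      = (Real.sqrt (2 * Real.pi))⁻¹ * (x * Real.exp (-(2⁻¹) * x ^ 2)) from fun x => by ring]
  exact (integrable_mul_exp_neg_mul_sq (by norm_num : (0:ℝ) < 2⁻¹)).const_mul _

lemma integrable_abs_phi : Integrable (fun x => |x| * phi x) := by
  have := integrable_id_phi.abs
  refine this.congr (Filter.Eventually.of_forall fun x => ?_)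
  simp [abs_mul, abs_of_nonneg (phi_nonneg x)]

lemma integrable_sq_phi : Integrable (fun x => x ^ 2 * phi x) := by
  refine Integrable.mono' ((integrable_exp_neg_mul_sq (by norm_num : (0:ℝ) < 4⁻¹)).const_mul
    ((Real.sqrt (2 * Real.pi))⁻¹ * 4)) ?_ (Filter.Eventually.of_forall fun x => ?_)
  · exact (continuous_pow 2 |>.mul continuous_phi).aestronglyMeasurable
  · rw [Real.norm_eq_abs, abs_mul, abs_of_nonneg (sq_nonneg x), abs_of_nonneg (phi_nonneg x)]
    unfold phi
    have h1 : x ^ 2 ≤ 4 * Real.exp (4⁻¹ * x ^ 2) := by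
      have := Real.add_one_le_exp (4⁻¹ * x ^ 2)
      nlinarith [Real.exp_pos (4⁻¹ * x ^ 2), sq_nonneg x]
    have h2 : x ^ 2 * ((Real.sqrt (2 * Real.pi))⁻¹ * Real.exp (-x ^ 2 / 2))
        ≤ (4 * Real.exp (4⁻¹ * x ^ 2)) * ((Real.sqrt (2 * Real.pi))⁻¹ * Real.exp (-x ^ 2 / 2)) := by
      exact mul_le_mul_of_nonneg_right h1 (by positivity)
    calc x ^ 2 * ((Real.sqrt (2 * Real.pi))⁻¹ * Real.exp (-x ^ 2 / 2))
        ≤ (4 * Real.exp (4⁻¹ * x ^ 2)) * ((Real.sqrt (2 * Real.pi))⁻¹ * Real.exp (-x ^ 2 / 2)) := h2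
      _ = (Real.sqrt (2 * Real.pi))⁻¹ * 4 * Real.exp (-(4⁻¹) * x ^ 2) := by
          rw [show (4:ℝ) * Real.exp (4⁻¹ * x ^ 2) * ((Real.sqrt (2 * Real.pi))⁻¹ * Real.exp (-x ^ 2 / 2))
            = (Real.sqrt (2 * Real.pi))⁻¹ * 4 * (Real.exp (4⁻¹ * x ^ 2) * Real.exp (-x ^ 2 / 2)) by ring,
            ← Real.exp_add]
          ring_nf

lemma integral_id_phi : ∫ x, x * phi x = 0 := by
  have h : ∀ x : ℝ, (-x) * phi (-x) = -(x * phi x) := by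
    intro x; unfold phi; ring_nf
  have h2 : ∫ x, x * phi x = ∫ x, (-x) * phi (-x) := by
    rw [show (fun x : ℝ => (-x) * phi (-x)) = fun x : ℝ => (fun y => y * phi y) (-x) from rfl]
    exact (integral_neg_eq_self _ _).symm
  have h3 : ∫ x, (-x) * phi (-x) = -∫ x, x * phi x := by
    simp_rw [h]; exact integral_neg _
  linarith [h2.trans h3]

lemma hasDerivAt_phi (x : ℝ) : HasDerivAt phi (-x * phi x) x := by
  have h : HasDerivAt (fun y : ℝ => -y ^ 2 / 2) (-x) x := by
    have := ((hasDerivAt_pow 2 x).neg).div_const 2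
    exact this.congr_deriv (by norm_num; ring)
  have h2 := (h.exp).const_mul (Real.sqrt (2 * Real.pi))⁻¹
  have hphi : phi = fun y => (Real.sqrt (2 * Real.pi))⁻¹ * Real.exp (-y ^ 2 / 2) := rfl
  rw [hphi]
  refine h2.congr_deriv ?_
  show (Real.sqrt (2 * Real.pi))⁻¹ * (Real.exp (-x ^ 2 / 2) * -x) = -x * ((Real.sqrt (2 * Real.pi))⁻¹ * Real.exp (-x ^ 2 / 2))
  ring

lemma tendsto_phi_atTop : Filter.Tendsto phi Filter.atTop (nhds 0) := by
  unfold phi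
  rw [show (0:ℝ) = (Real.sqrt (2 * Real.pi))⁻¹ * 0 by ring]
  refine Filter.Tendsto.const_mul _ ?_
  refine Real.tendsto_exp_atBot.comp ?_
  apply Filter.Tendsto.atBot_div_const (by norm_num : (0:ℝ) < 2)
  exact Filter.tendsto_neg_atTop_atBot.comp (Filter.tendsto_pow_atTop (by norm_num : 2 ≠ 0))

lemma tendsto_phi_atBot : Filter.Tendsto phi Filter.atBot (nhds 0) := by
  have h : ∀ x : ℝ, phi x = phi (-(-x)) := fun x => by ring_nf
  have heven : ∀ x : ℝ, phi (-x) = phi x := by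
    intro x; unfold phi; rw [show (-x)^2 = x^2 by ring]
  rw [show phi = (fun x => phi (-x)) from funext fun x => (heven x).symm]
  exact tendsto_phi_atTop.comp Filter.tendsto_neg_atBot_atTop

lemma tendsto_id_phi_atTop : Filter.Tendsto (fun x => x * phi x) Filter.atTop (nhds 0) := by
  have key : Filter.Tendsto (fun x : ℝ => (Real.sqrt (2*Real.pi))⁻¹ * (x * Real.exp (-x)))
      Filter.atTop (nhds 0) := by
    rw [show (0:ℝ) = (Real.sqrt (2 * Real.pi))⁻¹ * 0 by ring]
    refine Filter.Tendsto.const_mul _ ?_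
    simpa using Real.tendsto_pow_mul_exp_neg_atTop_nhds_zero 1
  refine squeeze_zero' ?_ ?_ key
  · filter_upwards [Filter.eventually_ge_atTop (0:ℝ)] with x hx
    exact mul_nonneg hx (phi_nonneg x)
  · filter_upwards [Filter.eventually_ge_atTop (2:ℝ)] with x hx
    unfold phi
    have hx0 : (0:ℝ) ≤ x := by linarith
    have h : Real.exp (-x ^ 2 / 2) ≤ Real.exp (-x) := by
      rw [Real.exp_le_exp]; nlinarith
    calc x * ((Real.sqrt (2 * Real.pi))⁻¹ * Real.exp (-x ^ 2 / 2))
        ≤ x * ((Real.sqrt (2 * Real.pi))⁻¹ * Real.exp (-x)) := by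
          refine mul_le_mul_of_nonneg_left ?_ hx0
          exact mul_le_mul_of_nonneg_left h (by positivity)
      _ = (Real.sqrt (2 * Real.pi))⁻¹ * (x * Real.exp (-x)) := by ring

lemma tendsto_id_phi_atBot : Filter.Tendsto (fun x => x * phi x) Filter.atBot (nhds 0) := by
  have heven : ∀ x : ℝ, phi (-x) = phi x := by
    intro x; unfold phi; rw [show (-x)^2 = x^2 by ring]
  have : Filter.Tendsto (fun x : ℝ => -((-x) * phi (-x))) Filter.atBot (nhds 0) := by
    rw [show (0:ℝ) = -0 by ring]
    exact ((tendsto_id_phi_atTop.comp Filter.tendsto_neg_atBot_atTop)).neg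
  refine this.congr fun x => ?_
  rw [heven]; ring

/-! ### Second moment -/

lemma integral_sq_phi : ∫ x, x ^ 2 * phi x = 1 := by
  have hu : ∀ x : ℝ, HasDerivAt (fun y : ℝ => y) ((fun _ : ℝ => (1:ℝ)) x) x :=
    fun x => hasDerivAt_id x
  have hv : ∀ x : ℝ, HasDerivAt (fun y : ℝ => -phi y) ((fun y : ℝ => y * phi y) x) x := by
    intro x
    exact (hasDerivAt_phi x).neg.congr_deriv (by ring)
  have huv' : Integrable ((fun y : ℝ => y) * fun y : ℝ => y * phi y) := by
    refine integrable_sq_phi.congr (Filter.Eventually.of_forall fun x => ?_)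
    simp [Pi.mul_apply]; ring
  have hu'v : Integrable ((fun _ : ℝ => (1:ℝ)) * fun y : ℝ => -phi y) := by
    refine integrable_phi.neg.congr (Filter.Eventually.of_forall fun x => ?_)
    simp [Pi.mul_apply]
  have h_bot : Filter.Tendsto ((fun y : ℝ => y) * fun y : ℝ => -phi y) Filter.atBot (nhds 0) := by
    have := tendsto_id_phi_atBot.neg
    rw [neg_zero] at this
    refine this.congr fun x => ?_
    simp [Pi.mul_apply]
  have h_top : Filter.Tendsto ((fun y : ℝ => y) * fun y : ℝ => -phi y) Filter.atTop (nhds 0) := by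
    have := tendsto_id_phi_atTop.neg
    rw [neg_zero] at this
    refine this.congr fun x => ?_
    simp [Pi.mul_apply]
  have key := MeasureTheory.integral_mul_deriv_eq_deriv_mul (fun x _ => hu x) (fun x _ => hv x) huv' hu'v h_bot h_top
  have h1 : ∫ x : ℝ, x * (x * phi x) = ∫ x, x ^ 2 * phi x := by
    congr 1; funext x; ring
  have h2 : (∫ x : ℝ, (1:ℝ) * -phi x) = -1 := by
    simp_rw [one_mul]
    rw [integral_neg, integral_phi]
  rw [h1] at key
  rw [key, h2]
  ring

/-! ### Facts about `Phi` -/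

lemma Phi_nonneg (x : ℝ) : 0 ≤ Phi x :=
  setIntegral_nonneg measurableSet_Iic fun t _ => phi_nonneg t

lemma Phi_le_one (x : ℝ) : Phi x ≤ 1 := by
  rw [← integral_phi]
  exact setIntegral_le_integral integrable_phi (Filter.Eventually.of_forall phi_nonneg)

lemma Phi_pos (x : ℝ) : 0 < Phi x := by
  rw [Phi, setIntegral_pos_iff_support_of_nonneg_ae
    (Filter.Eventually.of_forall phi_nonneg) integrable_phi.integrableOn]
  have : Function.support phi = Set.univ := by
    ext t; simp [Function.support, (phi_pos t).ne']
  rw [this, Set.univ_inter]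
  simp [Real.volume_Iic]

lemma Phi_sub (a x : ℝ) : Phi x - Phi a = ∫ t in a..x, phi t := by
  rw [Phi, Phi, intervalIntegral.integral_Iic_sub_Iic integrable_phi.integrableOn
    integrable_phi.integrableOn]

lemma hasDerivAt_Phi (x : ℝ) : HasDerivAt Phi (phi x) x := by
  have key : HasDerivAt (fun u => ∫ t in (0:ℝ)..u, phi t) (phi x) x :=
    intervalIntegral.integral_hasDerivAt_right
      integrable_phi.intervalIntegrable
      continuous_phi.aestronglyMeasurable.stronglyMeasurableAtFilter
      continuous_phi.continuousAt
  have : Phi = fun u => Phi 0 + ∫ t in (0:ℝ)..u, phi t := by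
    funext u; rw [← Phi_sub 0 u]; ring
  rw [this]
  simpa using (key.const_add (Phi 0))

lemma continuous_Phi : Continuous Phi :=
  continuous_iff_continuousAt.2 fun x => (hasDerivAt_Phi x).continuousAt

lemma tendsto_Phi_atBot : Filter.Tendsto Phi Filter.atBot (nhds 0) := by
  have hb : ∀ x : ℝ, x ≤ -2 → Phi x ≤ (Real.sqrt (2 * Real.pi))⁻¹ * Real.exp x := by
    intro x hx
    have hint : IntegrableOn (fun t => (Real.sqrt (2 * Real.pi))⁻¹ * Real.exp t) (Set.Iic x) := by
      exact (integrableOn_exp_Iic x).const_mul _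
    have hle : ∀ t ∈ Set.Iic x, phi t ≤ (Real.sqrt (2 * Real.pi))⁻¹ * Real.exp t := by
      intro t ht
      simp only [Set.mem_Iic] at ht
      have ht2 : t ≤ -2 := le_trans ht hx
      unfold phi
      refine mul_le_mul_of_nonneg_left ?_ (by positivity)
      rw [Real.exp_le_exp]
      nlinarith
    calc Phi x ≤ ∫ t in Set.Iic x, (Real.sqrt (2 * Real.pi))⁻¹ * Real.exp t := by
          exact setIntegral_mono_on integrable_phi.integrableOn hint measurableSet_Iic hle
      _ = (Real.sqrt (2 * Real.pi))⁻¹ * Real.exp x := by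
          rw [MeasureTheory.integral_const_mul]
          congr 1
          exact integral_exp_Iic x
  have h0 : Filter.Tendsto (fun x : ℝ => (Real.sqrt (2 * Real.pi))⁻¹ * Real.exp x)
      Filter.atBot (nhds 0) := by
    rw [show (0:ℝ) = (Real.sqrt (2 * Real.pi))⁻¹ * 0 by ring]
    exact Real.tendsto_exp_atBot.const_mul _
  refine squeeze_zero' ?_ ?_ h0
  · exact Filter.Eventually.of_forall Phi_nonneg
  · filter_upwards [Filter.eventually_le_atBot (-2:ℝ)] with x hx using hb x hx

/-! ### Shifted Gaussian integrals -/

lemma integral_comp_affine (f : ℝ → ℝ) {k : ℝ} (hk : 0 < k) (c : ℝ) :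
    ∫ x, f (k * x + c) = k⁻¹ * ∫ x, f x := by
  calc ∫ x, f (k * x + c) = |k⁻¹| • ∫ y, f (y + c) :=
        MeasureTheory.Measure.integral_comp_mul_left (fun y => f (y + c)) k
    _ = |k⁻¹| • ∫ y, f y := by rw [MeasureTheory.integral_add_right_eq_self (fun y => f y) c]
    _ = k⁻¹ * ∫ x, f x := by rw [abs_of_pos (inv_pos.2 hk), smul_eq_mul]

lemma gauss_shift0 {k : ℝ} (hk : 0 < k) (c : ℝ) :
    ∫ x, phi (k * x + c) = k⁻¹ := by
  rw [integral_comp_affine phi hk c, integral_phi, mul_one]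

lemma gauss_shift1 {k : ℝ} (hk : 0 < k) (c : ℝ) :
    ∫ x, x * phi (k * x + c) = -c / k ^ 2 := by
  have hkne : k ≠ 0 := hk.ne'
  have hfun : (fun x : ℝ => x * phi (k * x + c))
      = fun x => (fun u => ((u - c) / k) * phi u) (k * x + c) := by
    funext x
    simp only
    rw [show (k * x + c - c) / k = x by field_simp; ring]
  rw [hfun]
  rw [integral_comp_affine (fun u => ((u - c) / k) * phi u) hk c]
  have hsplit : (fun u : ℝ => ((u - c) / k) * phi u)
      = fun u => k⁻¹ * (u * phi u) + (-c / k) * phi u := by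
    funext u; field_simp; ring
  rw [hsplit]
  rw [integral_add ((integrable_id_phi).const_mul _) (integrable_phi.const_mul _),
    MeasureTheory.integral_const_mul, MeasureTheory.integral_const_mul,
    integral_id_phi, integral_phi]
  field_simp
  ring

lemma gauss_shift2 {k : ℝ} (hk : 0 < k) (c : ℝ) :
    ∫ x, x ^ 2 * phi (k * x + c) = (1 + c ^ 2) / k ^ 3 := by
  have hkne : k ≠ 0 := hk.ne'
  have hfun : (fun x : ℝ => x ^ 2 * phi (k * x + c))
      = fun x => (fun u => ((u - c) / k) ^ 2 * phi u) (k * x + c) := by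
    funext x
    simp only
    rw [show (k * x + c - c) / k = x by field_simp; ring]
  rw [hfun]
  rw [integral_comp_affine (fun u => ((u - c) / k) ^ 2 * phi u) hk c]
  have hsplit : (fun u : ℝ => ((u - c) / k) ^ 2 * phi u)
      = fun u => (k ^ 2)⁻¹ * (u ^ 2 * phi u) + ((-2 * c / k ^ 2) * (u * phi u)
        + (c ^ 2 / k ^ 2) * phi u) := by
    funext u; field_simp; ring
  rw [hsplit]
  have h1 : Integrable (fun u : ℝ => (k ^ 2)⁻¹ * (u ^ 2 * phi u)) :=
    integrable_sq_phi.const_mul _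
  have h2 : Integrable (fun u : ℝ => (-2 * c / k ^ 2) * (u * phi u)) :=
    integrable_id_phi.const_mul _
  have h3 : Integrable (fun u : ℝ => (c ^ 2 / k ^ 2) * phi u) :=
    integrable_phi.const_mul _
  have h23 : Integrable (fun u : ℝ => (-2 * c / k ^ 2) * (u * phi u) + (c ^ 2 / k ^ 2) * phi u) :=
    h2.add h3
  rw [integral_add h1 h23, integral_add h2 h3,
    MeasureTheory.integral_const_mul, MeasureTheory.integral_const_mul,
    MeasureTheory.integral_const_mul, integral_sq_phi, integral_id_phi, integral_phi]
  field_simp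
  ring

/-! ### Gaussian product identity -/

lemma phi_mul_phi (p q x : ℝ) :
    phi x * phi (p + q * x)
      = phi (p / Real.sqrt (1 + q ^ 2))
        * phi (Real.sqrt (1 + q ^ 2) * x + p * q / Real.sqrt (1 + q ^ 2)) := by
  set k := Real.sqrt (1 + q ^ 2) with hk
  have hkpos : 0 < k := Real.sqrt_pos.2 (by positivity)
  have hk2 : k ^ 2 = 1 + q ^ 2 := Real.sq_sqrt (by positivity)
  have hkne : k ≠ 0 := hkpos.ne'
  have hexp : ∀ a b : ℝ, phi a * phi b
      = (Real.sqrt (2 * Real.pi))⁻¹ * (Real.sqrt (2 * Real.pi))⁻¹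
        * Real.exp (-a ^ 2 / 2 + -b ^ 2 / 2) := by
    intro a b; unfold phi; rw [Real.exp_add]; ring
  rw [hexp, hexp]
  have harg : -x ^ 2 / 2 + -(p + q * x) ^ 2 / 2
      = -(p / k) ^ 2 / 2 + -(k * x + p * q / k) ^ 2 / 2 := by
    have h2 : k * x + p * q / k = (k ^ 2 * x + p * q) / k := by field_simp
    rw [h2, div_pow, div_pow, hk2]
    have h1q : (0:ℝ) < 1 + q ^ 2 := by positivity
    field_simp
    ring
  rw [harg]

/-! ### Gaussian-Gaussian integrals -/

lemma gaussG0 (p q : ℝ) :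
    ∫ x, phi x * phi (p + q * x)
      = (Real.sqrt (1 + q ^ 2))⁻¹ * phi (p / Real.sqrt (1 + q ^ 2)) := by
  set k := Real.sqrt (1 + q ^ 2) with hkdef
  have hkpos : 0 < k := Real.sqrt_pos.2 (by positivity)
  simp_rw [phi_mul_phi p q]
  rw [← hkdef, MeasureTheory.integral_const_mul, gauss_shift0 hkpos (p * q / k)]
  ring

lemma gaussG1 (p q : ℝ) :
    ∫ x, x * phi x * phi (p + q * x)
      = -(p * q / Real.sqrt (1 + q ^ 2) ^ 3) * phi (p / Real.sqrt (1 + q ^ 2)) := by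
  set k := Real.sqrt (1 + q ^ 2) with hkdef
  have hkpos : 0 < k := Real.sqrt_pos.2 (by positivity)
  have h : ∀ x : ℝ, x * phi x * phi (p + q * x)
      = phi (p / k) * (x * phi (k * x + p * q / k)) := by
    intro x
    rw [mul_assoc, phi_mul_phi p q, ← hkdef]
    ring
  simp_rw [h]
  rw [MeasureTheory.integral_const_mul, gauss_shift1 hkpos (p * q / k)]
  have hkne : k ≠ 0 := hkpos.ne'
  field_simp

lemma gaussG2 (p q : ℝ) :
    ∫ x, x ^ 2 * phi x * phi (p + q * x)
      = ((1 + p ^ 2 * q ^ 2 / (1 + q ^ 2)) / Real.sqrt (1 + q ^ 2) ^ 3)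
        * phi (p / Real.sqrt (1 + q ^ 2)) := by
  set k := Real.sqrt (1 + q ^ 2) with hkdef
  have hkpos : 0 < k := Real.sqrt_pos.2 (by positivity)
  have hk2 : k ^ 2 = 1 + q ^ 2 := Real.sq_sqrt (by positivity)
  have h : ∀ x : ℝ, x ^ 2 * phi x * phi (p + q * x)
      = phi (p / k) * (x ^ 2 * phi (k * x + p * q / k)) := by
    intro x
    rw [mul_assoc, phi_mul_phi p q, ← hkdef]
    ring
  simp_rw [h]
  rw [MeasureTheory.integral_const_mul, gauss_shift2 hkpos (p * q / k)]
  have hkne : k ≠ 0 := hkpos.ne'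
  rw [← hk2]
  field_simp

/-! ### Integrability helpers -/

lemma integrable_mul_of_bounded {w B : ℝ → ℝ} (hw : Integrable w) (hwc : Continuous w)
    (hB : Continuous B) {M : ℝ} (hM : ∀ x, |B x| ≤ M) :
    Integrable (fun x => w x * B x) := by
  refine (hw.abs.const_mul M).mono' (hwc.mul hB).aestronglyMeasurable ?_
  filter_upwards with x
  rw [Real.norm_eq_abs, abs_mul]
  calc |w x| * |B x| ≤ |w x| * M := mul_le_mul_of_nonneg_left (hM x) (abs_nonneg _)
    _ = M * |w x| := mul_comm _ _

lemma abs_Phi_le_one (x : ℝ) : |Phi x| ≤ 1 := by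
  rw [abs_of_nonneg (Phi_nonneg x)]; exact Phi_le_one x

lemma abs_phi_le (x : ℝ) : |phi x| ≤ (Real.sqrt (2 * Real.pi))⁻¹ := by
  rw [abs_of_nonneg (phi_nonneg x)]; exact phi_le x

lemma continuous_affine (p q : ℝ) : Continuous (fun x : ℝ => p + q * x) := by continuity

lemma integrable_w_Phi {w : ℝ → ℝ} (hw : Integrable w) (hwc : Continuous w) (p q : ℝ) :
    Integrable (fun x => w x * Phi (p + q * x)) :=
  integrable_mul_of_bounded hw hwc (continuous_Phi.comp (continuous_affine p q))
    (fun x => abs_Phi_le_one _)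

lemma integrable_w_phi {w : ℝ → ℝ} (hw : Integrable w) (hwc : Continuous w) (p q : ℝ) :
    Integrable (fun x => w x * phi (p + q * x)) :=
  integrable_mul_of_bounded hw hwc (continuous_phi.comp (continuous_affine p q))
    (fun x => abs_phi_le _)

lemma continuous_id_phi : Continuous (fun x : ℝ => x * phi x) :=
  continuous_id.mul continuous_phi

lemma continuous_sq_phi : Continuous (fun x : ℝ => x ^ 2 * phi x) :=
  (continuous_pow 2).mul continuous_phi

/-! ### Differentiation under the integral sign -/

lemma hasDerivAt_intF {w : ℝ → ℝ} (hw : Integrable w) (hwc : Continuous w) (q p : ℝ) :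
    HasDerivAt (fun p => ∫ x, w x * Phi (p + q * x)) (∫ x, w x * phi (p + q * x)) p := by
  have key := hasDerivAt_integral_of_dominated_loc_of_deriv_le (μ := volume)
    (F := fun p x => w x * Phi (p + q * x)) (F' := fun p x => w x * phi (p + q * x))
    (x₀ := p) (bound := fun x => |w x| * (Real.sqrt (2 * Real.pi))⁻¹)
    (s := Metric.ball p 1) (Metric.ball_mem_nhds p one_pos)
    (Filter.Eventually.of_forall fun p' =>
      ((hwc.mul (continuous_Phi.comp (continuous_affine p' q))).aestronglyMeasurable))
    (integrable_w_Phi hw hwc p q)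
    ((hwc.mul (continuous_phi.comp (continuous_affine p q))).aestronglyMeasurable)
    (Filter.Eventually.of_forall fun x => fun p' _ => ?_)
    (hw.abs.mul_const _)
    (Filter.Eventually.of_forall fun x => fun p' _ => ?_)
  · exact key.2
  · rw [Real.norm_eq_abs, abs_mul]
    exact mul_le_mul_of_nonneg_left (abs_phi_le _) (abs_nonneg _)
  · have h1 : HasDerivAt (fun p' : ℝ => p' + q * x) 1 p' := (hasDerivAt_id p').add_const (q * x)
    have h2 := (hasDerivAt_Phi (p' + q * x)).comp p' h1
    have h3 := h2.const_mul (w x)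
    simpa using h3

lemma tendsto_intF_atBot {w : ℝ → ℝ} (hw : Integrable w) (hwc : Continuous w) (q : ℝ) :
    Filter.Tendsto (fun p => ∫ x, w x * Phi (p + q * x)) Filter.atBot (nhds 0) := by
  have key := MeasureTheory.tendsto_integral_filter_of_dominated_convergence (μ := volume)
    (F := fun p x => w x * Phi (p + q * x)) (f := fun _ => (0:ℝ))
    (bound := fun x => |w x|)
    (Filter.Eventually.of_forall fun p' =>
      ((hwc.mul (continuous_Phi.comp (continuous_affine p' q))).aestronglyMeasurable))
    (Filter.Eventually.of_forall fun p' => Filter.Eventually.of_forall fun x => by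
      rw [Real.norm_eq_abs, abs_mul]
      calc |w x| * |Phi (p' + q * x)| ≤ |w x| * 1 :=
            mul_le_mul_of_nonneg_left (abs_Phi_le_one _) (abs_nonneg _)
        _ = |w x| := mul_one _)
    hw.abs
    (Filter.Eventually.of_forall fun x => by
      have h1 : Filter.Tendsto (fun p : ℝ => p + q * x) Filter.atBot Filter.atBot :=
        Filter.tendsto_atBot_add_const_right _ _ Filter.tendsto_id
      have h2 := (tendsto_Phi_atBot.comp h1).const_mul (w x)
      rw [mul_zero] at h2
      exact h2)
  simpa using key

lemma eq_of_deriv_eq_tendsto {f g f' : ℝ → ℝ}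
    (hf : ∀ p, HasDerivAt f (f' p) p) (hg : ∀ p, HasDerivAt g (f' p) p)
    (h : Filter.Tendsto (fun p => f p - g p) Filter.atBot (nhds 0)) : f = g := by
  have hd : ∀ p : ℝ, HasDerivAt (fun p => f p - g p) 0 p := by
    intro p
    exact ((hf p).sub (hg p)).congr_deriv (sub_self _)
  have hconst : ∀ p q : ℝ, f p - g p = f q - g q := fun p q =>
    is_const_of_deriv_eq_zero (fun x => (hd x).differentiableAt) (fun x => (hd x).deriv) p q
  funext p
  have h2 : Filter.Tendsto (fun q : ℝ => f q - g q) Filter.atBot (nhds (f p - g p)) := by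
    refine Filter.Tendsto.congr (fun q => hconst p q) tendsto_const_nhds
  have := tendsto_nhds_unique h2 h
  linarith

/-! ### The key `Phi`-integrals -/

lemma intF0 (q p : ℝ) :
    ∫ x, phi x * Phi (p + q * x) = Phi (p / Real.sqrt (1 + q ^ 2)) := by
  set k := Real.sqrt (1 + q ^ 2) with hkdef
  have hkpos : 0 < k := Real.sqrt_pos.2 (by positivity)
  have hfun := eq_of_deriv_eq_tendsto
    (f := fun p => ∫ x, phi x * Phi (p + q * x))
    (g := fun p => Phi (p / k))
    (f' := fun p => k⁻¹ * phi (p / k))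
    (fun p => by
      have h := hasDerivAt_intF integrable_phi continuous_phi q p
      rwa [gaussG0 p q, ← hkdef] at h)
    (fun p => by
      have h1 : HasDerivAt (fun p' : ℝ => p' / k) k⁻¹ p := by
        simpa using (hasDerivAt_id p).div_const k
      have h2 := (hasDerivAt_Phi (p / k)).comp p h1
      exact h2.congr_deriv (mul_comm _ _))
    (by
      have h1 : Filter.Tendsto (fun p : ℝ => p / k) Filter.atBot Filter.atBot :=
        Filter.Tendsto.atBot_div_const hkpos Filter.tendsto_id
      have := (tendsto_intF_atBot integrable_phi continuous_phi q).sub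
        (tendsto_Phi_atBot.comp h1)
      simpa using this)
  exact congrFun hfun p

lemma intF1 (q p : ℝ) :
    ∫ x, x * phi x * Phi (p + q * x)
      = (q / Real.sqrt (1 + q ^ 2)) * phi (p / Real.sqrt (1 + q ^ 2)) := by
  set k := Real.sqrt (1 + q ^ 2) with hkdef
  have hkpos : 0 < k := Real.sqrt_pos.2 (by positivity)
  have hkne : k ≠ 0 := hkpos.ne'
  have hfun := eq_of_deriv_eq_tendsto
    (f := fun p => ∫ x, x * phi x * Phi (p + q * x))
    (g := fun p => (q / k) * phi (p / k))
    (f' := fun p => -(p * q / k ^ 3) * phi (p / k))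
    (fun p => by
      have h := hasDerivAt_intF integrable_id_phi continuous_id_phi q p
      simp_rw [mul_assoc] at h ⊢
      rw [show ∫ x, x * (phi x * phi (p + q * x)) = ∫ x, x * phi x * phi (p + q * x) by
        congr 1; funext x; ring, gaussG1 p q, ← hkdef] at h
      convert h using 1 <;> ring)
    (fun p => by
      have h1 : HasDerivAt (fun p' : ℝ => p' / k) k⁻¹ p := by
        simpa using (hasDerivAt_id p).div_const k
      have h2 := ((hasDerivAt_phi (p / k)).comp p h1).const_mul (q / k)
      refine h2.congr_deriv ?_
      field_simp)
    (by
      have h1 : Filter.Tendsto (fun p : ℝ => p / k) Filter.atBot Filter.atBot :=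
        Filter.Tendsto.atBot_div_const hkpos Filter.tendsto_id
      have h3 := ((tendsto_phi_atBot.comp h1).const_mul (q / k))
      rw [mul_zero] at h3
      have := (tendsto_intF_atBot integrable_id_phi continuous_id_phi q).sub h3
      simpa using this)
  exact congrFun hfun p

lemma intF2 (q p : ℝ) :
    ∫ x, x ^ 2 * phi x * Phi (p + q * x)
      = Phi (p / Real.sqrt (1 + q ^ 2))
        - (p * q ^ 2 / Real.sqrt (1 + q ^ 2) ^ 3) * phi (p / Real.sqrt (1 + q ^ 2)) := by
  set k := Real.sqrt (1 + q ^ 2) with hkdef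
  have hkpos : 0 < k := Real.sqrt_pos.2 (by positivity)
  have hkne : k ≠ 0 := hkpos.ne'
  have hk2 : k ^ 2 = 1 + q ^ 2 := Real.sq_sqrt (by positivity)
  have hfun := eq_of_deriv_eq_tendsto
    (f := fun p => ∫ x, x ^ 2 * phi x * Phi (p + q * x))
    (g := fun p => Phi (p / k) - (p * q ^ 2 / k ^ 3) * phi (p / k))
    (f' := fun p => ((1 + p ^ 2 * q ^ 2 / (1 + q ^ 2)) / k ^ 3) * phi (p / k))
    (fun p => by
      have h := hasDerivAt_intF integrable_sq_phi continuous_sq_phi q p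
      simp_rw [mul_assoc] at h ⊢
      rw [show ∫ x, x ^ 2 * (phi x * phi (p + q * x)) = ∫ x, x ^ 2 * phi x * phi (p + q * x) by
        congr 1; funext x; ring, gaussG2 p q, ← hkdef] at h
      convert h using 1)
    (fun p => by
      have h1 : HasDerivAt (fun p' : ℝ => p' / k) k⁻¹ p := by
        simpa using (hasDerivAt_id p).div_const k
      have h2 := (hasDerivAt_Phi (p / k)).comp p h1
      have h3 : HasDerivAt (fun p' : ℝ => p' * q ^ 2 / k ^ 3) (1 * q ^ 2 / k ^ 3) p :=
        ((hasDerivAt_id p).mul_const (q ^ 2)).div_const (k ^ 3)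
      have h4 := ((hasDerivAt_phi (p / k)).comp p h1)
      have h5 := h3.mul h4
      have h6 := h2.sub h5
      refine h6.congr_deriv ?_
      simp only [Function.comp_apply]
      rw [← hk2]
      set v := phi (p / k) with hv
      field_simp
      linear_combination (k ^ 2 * v) * hk2)
    (by
      have h1 : Filter.Tendsto (fun p : ℝ => p / k) Filter.atBot Filter.atBot :=
        Filter.Tendsto.atBot_div_const hkpos Filter.tendsto_id
      have h3 := ((tendsto_id_phi_atBot.comp h1).const_mul (k * q ^ 2 / k ^ 3))
      rw [mul_zero] at h3
      have h4 : Filter.Tendsto (fun p : ℝ => (p * q ^ 2 / k ^ 3) * phi (p / k))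
          Filter.atBot (nhds 0) := by
        refine h3.congr fun p => ?_
        show k * q ^ 2 / k ^ 3 * ((fun x => x * phi x) (p / k)) = _
        simp only
        field_simp
      have := ((tendsto_intF_atBot integrable_sq_phi continuous_sq_phi q).sub
        ((tendsto_Phi_atBot.comp h1).sub h4))
      simpa using this)
  exact congrFun hfun p

/-! ### Change of variables for the inner integral -/

lemma integral_comp_sub_div (g : ℝ → ℝ) (m : ℝ) {s : ℝ} (hs : 0 < s) :
    ∫ y, g ((y - m) / s) = s * ∫ v, g v := by
  calc ∫ y, g ((y - m) / s) = ∫ y, g ((y + -m) / s) := by simp_rw [sub_eq_add_neg]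
    _ = ∫ u, g (u / s) := MeasureTheory.integral_add_right_eq_self (fun u => g (u / s)) (-m)
    _ = |s| • ∫ v, g v := MeasureTheory.Measure.integral_comp_div g s
    _ = s * ∫ v, g v := by rw [abs_of_pos hs, smul_eq_mul]

lemma inner_int (m d e : ℝ) {s : ℝ} (hs : 0 < s) :
    ∫ y, y * phi ((y - m) / s) * Phi (d + e * y)
      = s * (m * Phi ((d + e * m) / Real.sqrt (1 + (e * s) ^ 2))
          + s * ((e * s) / Real.sqrt (1 + (e * s) ^ 2))
            * phi ((d + e * m) / Real.sqrt (1 + (e * s) ^ 2))) := by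
  have hsne : s ≠ 0 := hs.ne'
  have key := integral_comp_sub_div
    (fun v => (m + s * v) * phi v * Phi ((d + e * m) + e * s * v)) m hs
  have e1 : ∫ y, y * phi ((y - m) / s) * Phi (d + e * y)
      = ∫ y, (m + s * ((y - m) / s)) * phi ((y - m) / s)
          * Phi ((d + e * m) + e * s * ((y - m) / s)) := by
    congr 1
    funext y
    rw [show m + s * ((y - m) / s) = y by field_simp; ring,
      show (d + e * m) + e * s * ((y - m) / s) = d + e * y by field_simp; ring]
  rw [e1, key]
  congr 1
  have h1 : Integrable (fun v : ℝ => m * (phi v * Phi ((d + e * m) + e * s * v))) := by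
    exact (integrable_w_Phi integrable_phi continuous_phi (d + e * m) (e * s)).const_mul m
  have h2 : Integrable (fun v : ℝ => s * (v * phi v * Phi ((d + e * m) + e * s * v))) := by
    exact (integrable_w_Phi integrable_id_phi continuous_id_phi (d + e * m) (e * s)).const_mul s
  have hsplit : (fun v : ℝ => (m + s * v) * phi v * Phi ((d + e * m) + e * s * v))
      = fun v => m * (phi v * Phi ((d + e * m) + e * s * v))
        + s * (v * phi v * Phi ((d + e * m) + e * s * v)) := by
    funext v; ring
  rw [hsplit, integral_add h1 h2, MeasureTheory.integral_const_mul,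
    MeasureTheory.integral_const_mul, intF0 (e * s) (d + e * m), intF1 (e * s) (d + e * m)]
  ring

/-! ### Bound on the bivariate density -/

lemma density_bound {lam : ℝ} (hlam : |lam| < 1) (x y : ℝ) :
    phi x * phi ((y - lam * x) / Real.sqrt (1 - lam ^ 2))
      ≤ Real.exp (-(2 * (1 + |lam|))⁻¹ * x ^ 2) * Real.exp (-(2 * (1 + |lam|))⁻¹ * y ^ 2) := by
  have hu0 : (0:ℝ) ≤ |lam| := abs_nonneg lam
  obtain ⟨hl1, hl2⟩ := abs_lt.mp hlam
  have hlam2 : lam ^ 2 < 1 := by nlinarith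
  have hs2pos : (0:ℝ) < 1 - lam ^ 2 := by linarith
  have hs2 : Real.sqrt (1 - lam ^ 2) ^ 2 = 1 - lam ^ 2 := Real.sq_sqrt hs2pos.le
  have hu1 : |lam| < 1 := hlam
  -- quadratic form inequality
  have hxy : 2 * lam * x * y ≤ 2 * (|lam| * (|x| * |y|)) := by
    have h := le_abs_self (lam * (x * y))
    rw [abs_mul, abs_mul] at h
    linarith
  have hQ : (1 - |lam|) * (x ^ 2 + y ^ 2) ≤ x ^ 2 + y ^ 2 - 2 * lam * x * y := by
    nlinarith [mul_nonneg hu0 (sq_nonneg (|x| - |y|)), sq_abs x, sq_abs y]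
  have key2 : (x ^ 2 + y ^ 2) * (1 - lam ^ 2)
      ≤ (x ^ 2 * (1 - lam ^ 2) + (y - lam * x) ^ 2) * (1 + |lam|) := by
    have hid : x ^ 2 * (1 - lam ^ 2) + (y - lam * x) ^ 2 = x ^ 2 + y ^ 2 - 2 * lam * x * y := by
      ring
    rw [hid]
    have := mul_le_mul_of_nonneg_left hQ (by positivity : (0:ℝ) ≤ 1 + |lam|)
    nlinarith [sq_abs lam]
  have hcomb : x ^ 2 / 2 + (y - lam * x) ^ 2 / (2 * (1 - lam ^ 2))
      = (x ^ 2 * (1 - lam ^ 2) + (y - lam * x) ^ 2) / (2 * (1 - lam ^ 2)) := by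
    field_simp
  have h3 : (x ^ 2 + y ^ 2) / (2 * (1 + |lam|))
      ≤ x ^ 2 / 2 + (y - lam * x) ^ 2 / (2 * (1 - lam ^ 2)) := by
    rw [hcomb, div_le_div_iff₀ (by positivity) (by positivity)]
    nlinarith [key2]
  -- exponent inequality
  have hexp : -x ^ 2 / 2 + -((y - lam * x) / Real.sqrt (1 - lam ^ 2)) ^ 2 / 2
      ≤ -(2 * (1 + |lam|))⁻¹ * x ^ 2 + -(2 * (1 + |lam|))⁻¹ * y ^ 2 := by
    rw [div_pow, hs2]
    have e1 : -(2 * (1 + |lam|))⁻¹ * x ^ 2 + -(2 * (1 + |lam|))⁻¹ * y ^ 2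
        = -((x ^ 2 + y ^ 2) / (2 * (1 + |lam|))) := by ring
    have e2 : -x ^ 2 / 2 + -((y - lam * x) ^ 2 / (1 - lam ^ 2)) / 2
        = -(x ^ 2 / 2 + (y - lam * x) ^ 2 / (2 * (1 - lam ^ 2))) := by
      field_simp
      ring
    rw [e1, e2]
    linarith
  -- coefficient bound
  have hcoef : (Real.sqrt (2 * Real.pi))⁻¹ ≤ 1 := by
    rw [inv_le_one_iff₀]
    right
    rw [show (1:ℝ) = Real.sqrt 1 by simp]
    exact Real.sqrt_le_sqrt (by nlinarith [Real.pi_gt_three])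
  calc phi x * phi ((y - lam * x) / Real.sqrt (1 - lam ^ 2))
      ≤ Real.exp (-x ^ 2 / 2)
        * Real.exp (-((y - lam * x) / Real.sqrt (1 - lam ^ 2)) ^ 2 / 2) := by
        unfold phi
        have b1 : (Real.sqrt (2 * Real.pi))⁻¹ * Real.exp (-x ^ 2 / 2) ≤ Real.exp (-x ^ 2 / 2) := by
          nlinarith [Real.exp_pos (-x ^ 2 / 2), hcoef]
        have b2 : (Real.sqrt (2 * Real.pi))⁻¹
            * Real.exp (-((y - lam * x) / Real.sqrt (1 - lam ^ 2)) ^ 2 / 2)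
            ≤ Real.exp (-((y - lam * x) / Real.sqrt (1 - lam ^ 2)) ^ 2 / 2) := by
          nlinarith [Real.exp_pos (-((y - lam * x) / Real.sqrt (1 - lam ^ 2)) ^ 2 / 2), hcoef]
        exact mul_le_mul b1 b2 (by positivity) (Real.exp_pos _).le
    _ ≤ Real.exp (-(2 * (1 + |lam|))⁻¹ * x ^ 2) * Real.exp (-(2 * (1 + |lam|))⁻¹ * y ^ 2) := by
        rw [← Real.exp_add, ← Real.exp_add]
        exact Real.exp_le_exp.mpr hexp

set_option maxHeartbeats 2000000 in
theorem esn2_cross_moment (lam α₁ α₂ τ : ℝ) (hlam : |lam| < 1) :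
    ∫ z : ℝ × ℝ, z.1 * z.2 * esn2Pdf lam α₁ α₂ τ z =
      lam + ((α₁ + lam * α₂) / Real.sqrt (1 + (α₁ ^ 2 + α₂ ^ 2 + 2 * α₁ * α₂ * lam))) *
          ((α₂ + lam * α₁) / Real.sqrt (1 + (α₁ ^ 2 + α₂ ^ 2 + 2 * α₁ * α₂ * lam))) *
          (zeta2 τ + (zeta1 τ) ^ 2) := by
  obtain ⟨hl1, hl2⟩ := abs_lt.mp hlam
  have hlam2 : lam ^ 2 < 1 := by nlinarith
  have hs2pos : (0:ℝ) < 1 - lam ^ 2 := by linarith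
  have hspos : 0 < Real.sqrt (1 - lam ^ 2) := Real.sqrt_pos.2 hs2pos
  have hs2 : Real.sqrt (1 - lam ^ 2) ^ 2 = 1 - lam ^ 2 := Real.sq_sqrt hs2pos.le
  have hsne : Real.sqrt (1 - lam ^ 2) ≠ 0 := hspos.ne'
  have hA2pos : (0:ℝ) < 1 + (α₁ ^ 2 + α₂ ^ 2 + 2 * α₁ * α₂ * lam) := by
    nlinarith [mul_nonneg (by linarith : (0:ℝ) ≤ 1 + lam) (sq_nonneg (α₁ + α₂)),
      mul_nonneg (by linarith : (0:ℝ) ≤ 1 - lam) (sq_nonneg (α₁ - α₂))]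
  have hRpos : 0 < Real.sqrt (1 + (α₁ ^ 2 + α₂ ^ 2 + 2 * α₁ * α₂ * lam)) :=
    Real.sqrt_pos.2 hA2pos
  have hR2 : Real.sqrt (1 + (α₁ ^ 2 + α₂ ^ 2 + 2 * α₁ * α₂ * lam)) ^ 2
      = 1 + (α₁ ^ 2 + α₂ ^ 2 + 2 * α₁ * α₂ * lam) := Real.sq_sqrt hA2pos.le
  have hPhiτ : 0 < Phi τ := Phi_pos τ
  have hTpos : 0 < Real.sqrt (1 + (α₂ * Real.sqrt (1 - lam ^ 2)) ^ 2) :=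
    Real.sqrt_pos.2 (by positivity)
  have hT2 : Real.sqrt (1 + (α₂ * Real.sqrt (1 - lam ^ 2)) ^ 2) ^ 2
      = 1 + (α₂ * Real.sqrt (1 - lam ^ 2)) ^ 2 := Real.sq_sqrt (by positivity)
  have hTne : Real.sqrt (1 + (α₂ * Real.sqrt (1 - lam ^ 2)) ^ 2) ≠ 0 := hTpos.ne'
  -- the density identity
  have hdens : ∀ x y : ℝ,
      (2 * Real.pi * Real.sqrt (1 - lam ^ 2))⁻¹
        * Real.exp (-(x ^ 2 + y ^ 2 - 2 * lam * x * y) / (2 * (1 - lam ^ 2)))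
      = phi x * ((Real.sqrt (1 - lam ^ 2))⁻¹
          * phi ((y - lam * x) / Real.sqrt (1 - lam ^ 2))) := by
    intro x y
    have hc : (2 * Real.pi * Real.sqrt (1 - lam ^ 2))⁻¹
        = (Real.sqrt (2 * Real.pi))⁻¹
          * ((Real.sqrt (1 - lam ^ 2))⁻¹ * (Real.sqrt (2 * Real.pi))⁻¹) := by
      have h2pi : Real.sqrt (2 * Real.pi) * Real.sqrt (2 * Real.pi) = 2 * Real.pi :=
        Real.mul_self_sqrt (by positivity)
      have he : (2 * Real.pi * Real.sqrt (1 - lam ^ 2))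
          = (Real.sqrt (2 * Real.pi) * Real.sqrt (2 * Real.pi)) * Real.sqrt (1 - lam ^ 2) := by
        rw [h2pi]
      rw [he, mul_inv, mul_inv]
      ring
    have hexp : Real.exp (-(x ^ 2 + y ^ 2 - 2 * lam * x * y) / (2 * (1 - lam ^ 2)))
        = Real.exp (-x ^ 2 / 2)
          * Real.exp (-((y - lam * x) / Real.sqrt (1 - lam ^ 2)) ^ 2 / 2) := by
      rw [← Real.exp_add]
      congr 1
      rw [div_pow, hs2]
      field_simp
      ring
    unfold phi
    rw [hc, hexp]
    ring
  -- nice form of the integrand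
  have hfeq : (fun z : ℝ × ℝ => z.1 * z.2 * esn2Pdf lam α₁ α₂ τ z)
      = fun z : ℝ × ℝ => (Phi τ)⁻¹ * ((z.1 * phi z.1) * ((Real.sqrt (1 - lam ^ 2))⁻¹
          * (z.2 * phi ((z.2 - lam * z.1) / Real.sqrt (1 - lam ^ 2))
            * Phi (τ * Real.sqrt (1 + (α₁ ^ 2 + α₂ ^ 2 + 2 * α₁ * α₂ * lam))
              + α₁ * z.1 + α₂ * z.2)))) := by
    funext z
    simp only [esn2Pdf]
    rw [hdens z.1 z.2]
    ring
  -- integrability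
  have hg : Integrable (fun x : ℝ => |x| * Real.exp (-(2 * (1 + |lam|))⁻¹ * x ^ 2)) := by
    have h := (integrable_mul_exp_neg_mul_sq
      (show (0:ℝ) < (2 * (1 + |lam|))⁻¹ by positivity)).abs
    refine h.congr (Filter.Eventually.of_forall fun x => ?_)
    show |x * Real.exp (-(2 * (1 + |lam|))⁻¹ * x ^ 2)|
      = |x| * Real.exp (-(2 * (1 + |lam|))⁻¹ * x ^ 2)
    rw [abs_mul, abs_of_nonneg (Real.exp_pos _).le]
  have hbi : Integrable (fun z : ℝ × ℝ =>
      ((Phi τ)⁻¹ * (Real.sqrt (1 - lam ^ 2))⁻¹)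
        * ((|z.1| * Real.exp (-(2 * (1 + |lam|))⁻¹ * z.1 ^ 2))
          * (|z.2| * Real.exp (-(2 * (1 + |lam|))⁻¹ * z.2 ^ 2)))) (volume.prod volume) :=
    (hg.mul_prod hg).const_mul _
  have hcontG : Continuous (fun z : ℝ × ℝ => (Phi τ)⁻¹ * ((z.1 * phi z.1)
      * ((Real.sqrt (1 - lam ^ 2))⁻¹
        * (z.2 * phi ((z.2 - lam * z.1) / Real.sqrt (1 - lam ^ 2))
          * Phi (τ * Real.sqrt (1 + (α₁ ^ 2 + α₂ ^ 2 + 2 * α₁ * α₂ * lam))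
            + α₁ * z.1 + α₂ * z.2))))) := by
    have c1 : Continuous (fun z : ℝ × ℝ => z.1 * phi z.1) :=
      continuous_fst.mul (continuous_phi.comp continuous_fst)
    have c2 : Continuous (fun z : ℝ × ℝ => (z.2 - lam * z.1) / Real.sqrt (1 - lam ^ 2)) :=
      (continuous_snd.sub (continuous_const.mul continuous_fst)).div_const _
    have c3 : Continuous (fun z : ℝ × ℝ =>
        τ * Real.sqrt (1 + (α₁ ^ 2 + α₂ ^ 2 + 2 * α₁ * α₂ * lam)) + α₁ * z.1 + α₂ * z.2) := by
      continuity
    exact continuous_const.mul (c1.mul (continuous_const.mul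
      ((continuous_snd.mul (continuous_phi.comp c2)).mul (continuous_Phi.comp c3))))
  have hInt : Integrable (fun z : ℝ × ℝ => (Phi τ)⁻¹ * ((z.1 * phi z.1)
      * ((Real.sqrt (1 - lam ^ 2))⁻¹
        * (z.2 * phi ((z.2 - lam * z.1) / Real.sqrt (1 - lam ^ 2))
          * Phi (τ * Real.sqrt (1 + (α₁ ^ 2 + α₂ ^ 2 + 2 * α₁ * α₂ * lam))
            + α₁ * z.1 + α₂ * z.2))))) (volume.prod volume) := by
    refine hbi.mono' hcontG.aestronglyMeasurable ?_
    filter_upwards with z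
    obtain ⟨x, y⟩ := z
    rw [Real.norm_eq_abs]
    have hEq : |(Phi τ)⁻¹ * ((x * phi x) * ((Real.sqrt (1 - lam ^ 2))⁻¹
        * (y * phi ((y - lam * x) / Real.sqrt (1 - lam ^ 2))
          * Phi (τ * Real.sqrt (1 + (α₁ ^ 2 + α₂ ^ 2 + 2 * α₁ * α₂ * lam))
            + α₁ * x + α₂ * y))))|
        = ((Phi τ)⁻¹ * (Real.sqrt (1 - lam ^ 2))⁻¹) * ((|x| * |y|)
          * ((phi x * phi ((y - lam * x) / Real.sqrt (1 - lam ^ 2)))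
            * Phi (τ * Real.sqrt (1 + (α₁ ^ 2 + α₂ ^ 2 + 2 * α₁ * α₂ * lam))
              + α₁ * x + α₂ * y))) := by
      simp only [abs_mul, abs_inv]
      rw [abs_of_nonneg (Phi_nonneg τ), abs_of_nonneg (Phi_nonneg _),
        abs_of_nonneg (phi_nonneg x), abs_of_nonneg (phi_nonneg _),
        abs_of_nonneg (Real.sqrt_nonneg _)]
      ring
    rw [hEq]
    have hb1 : phi x * phi ((y - lam * x) / Real.sqrt (1 - lam ^ 2))
        ≤ Real.exp (-(2 * (1 + |lam|))⁻¹ * x ^ 2)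
          * Real.exp (-(2 * (1 + |lam|))⁻¹ * y ^ 2) := density_bound hlam x y
    have hb2 : (phi x * phi ((y - lam * x) / Real.sqrt (1 - lam ^ 2)))
        * Phi (τ * Real.sqrt (1 + (α₁ ^ 2 + α₂ ^ 2 + 2 * α₁ * α₂ * lam)) + α₁ * x + α₂ * y)
        ≤ (Real.exp (-(2 * (1 + |lam|))⁻¹ * x ^ 2)
          * Real.exp (-(2 * (1 + |lam|))⁻¹ * y ^ 2)) * 1 :=
      mul_le_mul hb1 (Phi_le_one _) (Phi_nonneg _) (by positivity)
    calc ((Phi τ)⁻¹ * (Real.sqrt (1 - lam ^ 2))⁻¹) * ((|x| * |y|)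
          * ((phi x * phi ((y - lam * x) / Real.sqrt (1 - lam ^ 2)))
            * Phi (τ * Real.sqrt (1 + (α₁ ^ 2 + α₂ ^ 2 + 2 * α₁ * α₂ * lam))
              + α₁ * x + α₂ * y)))
        ≤ ((Phi τ)⁻¹ * (Real.sqrt (1 - lam ^ 2))⁻¹) * ((|x| * |y|)
          * ((Real.exp (-(2 * (1 + |lam|))⁻¹ * x ^ 2)
            * Real.exp (-(2 * (1 + |lam|))⁻¹ * y ^ 2)) * 1)) := by
          refine mul_le_mul_of_nonneg_left (mul_le_mul_of_nonneg_left hb2 (by positivity)) ?_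
          exact mul_nonneg (inv_nonneg.2 hPhiτ.le) (inv_nonneg.2 (Real.sqrt_nonneg _))
      _ = ((Phi τ)⁻¹ * (Real.sqrt (1 - lam ^ 2))⁻¹)
          * ((|x| * Real.exp (-(2 * (1 + |lam|))⁻¹ * x ^ 2))
            * (|y| * Real.exp (-(2 * (1 + |lam|))⁻¹ * y ^ 2))) := by ring
  -- Fubini
  rw [hfeq]
  have hprod : (∫ z : ℝ × ℝ, (Phi τ)⁻¹ * ((z.1 * phi z.1) * ((Real.sqrt (1 - lam ^ 2))⁻¹
      * (z.2 * phi ((z.2 - lam * z.1) / Real.sqrt (1 - lam ^ 2))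
        * Phi (τ * Real.sqrt (1 + (α₁ ^ 2 + α₂ ^ 2 + 2 * α₁ * α₂ * lam))
          + α₁ * z.1 + α₂ * z.2)))))
      = ∫ x : ℝ, ∫ y : ℝ, (Phi τ)⁻¹ * ((x * phi x) * ((Real.sqrt (1 - lam ^ 2))⁻¹
        * (y * phi ((y - lam * x) / Real.sqrt (1 - lam ^ 2))
          * Phi (τ * Real.sqrt (1 + (α₁ ^ 2 + α₂ ^ 2 + 2 * α₁ * α₂ * lam))
            + α₁ * x + α₂ * y)))) := by
    rw [MeasureTheory.Measure.volume_eq_prod]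
    exact MeasureTheory.integral_prod _ hInt
  rw [hprod]
  -- evaluate the inner integral and reshape, for each x
  have hin : ∀ x : ℝ, (∫ y : ℝ, y * phi ((y - lam * x) / Real.sqrt (1 - lam ^ 2))
      * Phi (τ * Real.sqrt (1 + (α₁ ^ 2 + α₂ ^ 2 + 2 * α₁ * α₂ * lam))
        + α₁ * x + α₂ * y))
      = Real.sqrt (1 - lam ^ 2) * ((lam * x)
          * Phi ((τ * Real.sqrt (1 + (α₁ ^ 2 + α₂ ^ 2 + 2 * α₁ * α₂ * lam)) + α₁ * x
              + α₂ * (lam * x)) / Real.sqrt (1 + (α₂ * Real.sqrt (1 - lam ^ 2)) ^ 2))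
        + Real.sqrt (1 - lam ^ 2) * ((α₂ * Real.sqrt (1 - lam ^ 2))
            / Real.sqrt (1 + (α₂ * Real.sqrt (1 - lam ^ 2)) ^ 2))
          * phi ((τ * Real.sqrt (1 + (α₁ ^ 2 + α₂ ^ 2 + 2 * α₁ * α₂ * lam)) + α₁ * x
              + α₂ * (lam * x)) / Real.sqrt (1 + (α₂ * Real.sqrt (1 - lam ^ 2)) ^ 2))) :=
    fun x => inner_int (lam * x)
      (τ * Real.sqrt (1 + (α₁ ^ 2 + α₂ ^ 2 + 2 * α₁ * α₂ * lam)) + α₁ * x) α₂ hspos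
  have houterfun : (fun x : ℝ => ∫ y : ℝ, (Phi τ)⁻¹ * ((x * phi x)
      * ((Real.sqrt (1 - lam ^ 2))⁻¹
        * (y * phi ((y - lam * x) / Real.sqrt (1 - lam ^ 2))
          * Phi (τ * Real.sqrt (1 + (α₁ ^ 2 + α₂ ^ 2 + 2 * α₁ * α₂ * lam))
            + α₁ * x + α₂ * y)))))
      = fun x : ℝ => (Phi τ)⁻¹ * (lam * (x ^ 2 * phi x
          * Phi (τ * Real.sqrt (1 + (α₁ ^ 2 + α₂ ^ 2 + 2 * α₁ * α₂ * lam))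
              / Real.sqrt (1 + (α₂ * Real.sqrt (1 - lam ^ 2)) ^ 2)
            + (α₁ + lam * α₂) / Real.sqrt (1 + (α₂ * Real.sqrt (1 - lam ^ 2)) ^ 2) * x))
        + ((1 - lam ^ 2) * α₂ / Real.sqrt (1 + (α₂ * Real.sqrt (1 - lam ^ 2)) ^ 2))
          * (x * phi x
            * phi (τ * Real.sqrt (1 + (α₁ ^ 2 + α₂ ^ 2 + 2 * α₁ * α₂ * lam))
                / Real.sqrt (1 + (α₂ * Real.sqrt (1 - lam ^ 2)) ^ 2)
              + (α₁ + lam * α₂) / Real.sqrt (1 + (α₂ * Real.sqrt (1 - lam ^ 2)) ^ 2) * x))) := by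
    funext x
    rw [MeasureTheory.integral_const_mul, MeasureTheory.integral_const_mul,
      MeasureTheory.integral_const_mul, hin x]
    rw [show (τ * Real.sqrt (1 + (α₁ ^ 2 + α₂ ^ 2 + 2 * α₁ * α₂ * lam)) + α₁ * x
          + α₂ * (lam * x)) / Real.sqrt (1 + (α₂ * Real.sqrt (1 - lam ^ 2)) ^ 2)
        = τ * Real.sqrt (1 + (α₁ ^ 2 + α₂ ^ 2 + 2 * α₁ * α₂ * lam))
            / Real.sqrt (1 + (α₂ * Real.sqrt (1 - lam ^ 2)) ^ 2)
          + (α₁ + lam * α₂) / Real.sqrt (1 + (α₂ * Real.sqrt (1 - lam ^ 2)) ^ 2) * x by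
      ring]
    rw [show ((1 - lam ^ 2) * α₂ / Real.sqrt (1 + (α₂ * Real.sqrt (1 - lam ^ 2)) ^ 2))
        = Real.sqrt (1 - lam ^ 2) * (Real.sqrt (1 - lam ^ 2) * α₂
          / Real.sqrt (1 + (α₂ * Real.sqrt (1 - lam ^ 2)) ^ 2)) by
      linear_combination (-α₂ / Real.sqrt (1 + (α₂ * Real.sqrt (1 - lam ^ 2)) ^ 2)) * hs2]
    rw [show ∀ X : ℝ, (Real.sqrt (1 - lam ^ 2))⁻¹ * (Real.sqrt (1 - lam ^ 2) * X) = X from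
      fun X => by rw [← mul_assoc, inv_mul_cancel₀ hsne, one_mul]]
    ring
  rw [houterfun]
  -- split and evaluate the outer integral
  have hi2 : Integrable (fun x : ℝ => lam * (x ^ 2 * phi x
      * Phi (τ * Real.sqrt (1 + (α₁ ^ 2 + α₂ ^ 2 + 2 * α₁ * α₂ * lam))
          / Real.sqrt (1 + (α₂ * Real.sqrt (1 - lam ^ 2)) ^ 2)
        + (α₁ + lam * α₂) / Real.sqrt (1 + (α₂ * Real.sqrt (1 - lam ^ 2)) ^ 2) * x))) := by
    exact (integrable_w_Phi integrable_sq_phi continuous_sq_phi _ _).const_mul lam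
  have hi1 : Integrable (fun x : ℝ =>
      ((1 - lam ^ 2) * α₂ / Real.sqrt (1 + (α₂ * Real.sqrt (1 - lam ^ 2)) ^ 2))
        * (x * phi x
          * phi (τ * Real.sqrt (1 + (α₁ ^ 2 + α₂ ^ 2 + 2 * α₁ * α₂ * lam))
              / Real.sqrt (1 + (α₂ * Real.sqrt (1 - lam ^ 2)) ^ 2)
            + (α₁ + lam * α₂) / Real.sqrt (1 + (α₂ * Real.sqrt (1 - lam ^ 2)) ^ 2) * x))) := by
    exact (integrable_w_phi integrable_id_phi continuous_id_phi _ _).const_mul _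
  rw [MeasureTheory.integral_const_mul, integral_add hi2 hi1,
    MeasureTheory.integral_const_mul, MeasureTheory.integral_const_mul,
    intF2 ((α₁ + lam * α₂) / Real.sqrt (1 + (α₂ * Real.sqrt (1 - lam ^ 2)) ^ 2))
      (τ * Real.sqrt (1 + (α₁ ^ 2 + α₂ ^ 2 + 2 * α₁ * α₂ * lam))
        / Real.sqrt (1 + (α₂ * Real.sqrt (1 - lam ^ 2)) ^ 2)),
    gaussG1 (τ * Real.sqrt (1 + (α₁ ^ 2 + α₂ ^ 2 + 2 * α₁ * α₂ * lam))
        / Real.sqrt (1 + (α₂ * Real.sqrt (1 - lam ^ 2)) ^ 2))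
      ((α₁ + lam * α₂) / Real.sqrt (1 + (α₂ * Real.sqrt (1 - lam ^ 2)) ^ 2))]
  -- simplify the square roots
  have hkey : (1:ℝ) + ((α₁ + lam * α₂) / Real.sqrt (1 + (α₂ * Real.sqrt (1 - lam ^ 2)) ^ 2)) ^ 2
      = (Real.sqrt (1 + (α₁ ^ 2 + α₂ ^ 2 + 2 * α₁ * α₂ * lam))
        / Real.sqrt (1 + (α₂ * Real.sqrt (1 - lam ^ 2)) ^ 2)) ^ 2 := by
    rw [div_pow, div_pow, hR2, hT2, mul_pow, hs2]
    have h1 : (0:ℝ) < 1 + α₂ ^ 2 * (1 - lam ^ 2) := by nlinarith [sq_nonneg α₂]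
    field_simp
    ring
  have hkT : Real.sqrt (1 + ((α₁ + lam * α₂)
      / Real.sqrt (1 + (α₂ * Real.sqrt (1 - lam ^ 2)) ^ 2)) ^ 2)
      = Real.sqrt (1 + (α₁ ^ 2 + α₂ ^ 2 + 2 * α₁ * α₂ * lam))
        / Real.sqrt (1 + (α₂ * Real.sqrt (1 - lam ^ 2)) ^ 2) := by
    rw [hkey]
    exact Real.sqrt_sq (by positivity)
  rw [hkT]
  have hptau : τ * Real.sqrt (1 + (α₁ ^ 2 + α₂ ^ 2 + 2 * α₁ * α₂ * lam))
      / Real.sqrt (1 + (α₂ * Real.sqrt (1 - lam ^ 2)) ^ 2)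
      / (Real.sqrt (1 + (α₁ ^ 2 + α₂ ^ 2 + 2 * α₁ * α₂ * lam))
        / Real.sqrt (1 + (α₂ * Real.sqrt (1 - lam ^ 2)) ^ 2)) = τ := by
    field_simp
    rw [mul_div_assoc, div_self (ne_of_gt (Real.sqrt_pos.2 (by linarith [hA2pos]))), mul_one]
  rw [hptau]
  -- final algebra
  simp only [zeta1, zeta2]
  have hQpos := hPhiτ
  have hRpos' := hRpos
  have hTne' := hTne
  generalize hP : phi τ = P
  generalize hQ : Phi τ = Q at hQpos
  generalize hTv : Real.sqrt (1 + (α₂ * Real.sqrt (1 - lam ^ 2)) ^ 2) = Tv at hTne'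
  generalize hRv : Real.sqrt (1 + (α₁ ^ 2 + α₂ ^ 2 + 2 * α₁ * α₂ * lam)) = Rv at hRpos'
  field_simp
  ring
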